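/- If the metric space Δ_ω(ℕ) of finite subsets of ℕ with the symmetric difference metric embeds almost isometrically into C(K) for a compact metric space K (i.e., for every ε > 0 there is a bi-Lipschitz embedding with distortion at most 1 + ε), then the ω-th Cantor–Bendixson derivative K^{(ω)} = ⋂_{k<ω} K^{(k)} is nonempty. -/

import Mathlib

open Finset Filter

lemma combo {C : Type*} [Finite C] (c : ℕ → ℕ → C) :
    ∃ v w d : ℕ, v < w ∧ w < d ∧ c v w = c w d := by
  classical
  have := Finite.exists_ne_map_eq_of_infinite
    (fun v : ℕ => (fun x : C => decide (∃ d, v < d ∧ c v d = x)))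
  obtain ⟨v, w, hvw, hU⟩ := this
  wlog hlt : v < w generalizing v w
  · exact this w v hvw.symm hU.symm (by omega)
  have hx : (fun x : C => decide (∃ d, v < d ∧ c v d = x)) (c v w) = true := by
    simp only [decide_eq_true_eq]
    exact ⟨w, hlt, rfl⟩
  rw [hU] at hx
  simp only [decide_eq_true_eq] at hx
  obtain ⟨d, hwd, hcd⟩ := hx
  exact ⟨v, w, d, hlt, hwd, hcd.symm⟩

lemma arith (θ ε m t u1 u2 v1 v2 : ℝ) (hm : 1 ≤ m)
    (hθ : 99/100 ≤ θ) (hε : 0 ≤ ε) (hε1 : ε ≤ 1/100)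
    (ht : |t| ≤ (1+ε)*m) (hu1 : |u1| ≤ (1+ε)*m) (hu2 : |u2| ≤ (1+ε)*m)
    (hv1 : |v1| ≤ (1+ε)*m) (hv2 : |v2| ≤ (1+ε)*m)
    (hF1 : 3*(θ*m) ≤ |t+u1-v1|) (hF2 : 3*(θ*m) ≤ |t+u2-v2|)
    (hs : (0 ≤ t+u1-v1) ↔ (0 ≤ t+u2-v2))
    (hc : |t+u2-v1| ≤ (1+ε)*m) : False := by
  have hm0 : (0:ℝ) ≤ m := by linarith
  have hX : (99/100)*m ≤ θ*m := mul_le_mul_of_nonneg_right hθ hm0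
  have hY : ε*m ≤ (1/100)*m := mul_le_mul_of_nonneg_right hε1 hm0
  rw [abs_le] at ht hu1 hu2 hv1 hv2 hc
  rcases le_or_gt 0 (t+u1-v1) with h1 | h1
  · have h2 : 0 ≤ t+u2-v2 := hs.mp h1
    rw [abs_of_nonneg h1] at hF1
    rw [abs_of_nonneg h2] at hF2
    linarith [ht.2, hu1.2, hv2.1, hc.2]
  · have h2 : ¬ (0 ≤ t+u2-v2) := fun h => h1.not_ge (hs.mpr h)
    push_neg at h2
    rw [abs_of_neg h1] at hF1
    rw [abs_of_neg h2] at hF2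
    linarith [ht.1, hu1.1, hv2.2, hc.1]

section blocks
variable {σ τ B B' : Finset ℕ}

lemma sd_big (hB : ∀ a ∈ B, a ∉ σ ∧ a ∉ τ) (hB' : ∀ a ∈ B', a ∉ σ ∧ a ∉ τ)
    (hBB' : ∀ a ∈ B, a ∉ B') :
    (symmDiff (σ ∪ B') (τ ∪ B)).card = (symmDiff σ τ).card + B.card + B'.card := by
  classical
  have h1 : symmDiff (σ ∪ B') (τ ∪ B) = (symmDiff σ τ ∪ B) ∪ B' := by
    ext a
    simp only [Finset.mem_symmDiff, Finset.mem_union]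
    have h1 := hB a; have h2 := hB' a; have h3 := hBB' a
    tauto
  rw [h1, Finset.card_union_of_disjoint, Finset.card_union_of_disjoint]
  · rw [Finset.disjoint_right]
    intro a ha
    have := hB a ha
    simp only [Finset.mem_symmDiff]
    tauto
  · rw [Finset.disjoint_right]
    intro a ha
    have h2 := hB' a ha
    simp only [Finset.mem_union, Finset.mem_symmDiff]
    push_neg
    exact ⟨by tauto, fun hc => absurd ha (hBB' a hc)⟩

lemma sd_add (hB : ∀ a ∈ B, a ∉ σ ∧ a ∉ τ) :
    symmDiff τ (τ ∪ B) = B := by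
  ext a
  simp only [Finset.mem_symmDiff, Finset.mem_union]
  have h1 := hB a
  tauto

lemma sd_both (hB : ∀ a ∈ B, a ∉ σ ∧ a ∉ τ) :
    symmDiff (σ ∪ B) (τ ∪ B) = symmDiff σ τ := by
  ext a
  simp only [Finset.mem_symmDiff, Finset.mem_union]
  have h1 := hB a
  tauto

end blocks

lemma blocks (σ τ : Finset ℕ) (m : ℕ) :
    ∃ B : ℕ → Finset ℕ, (∀ j, (B j).card = m) ∧
      (∀ j, ∀ a ∈ B j, a ∉ σ ∧ a ∉ τ) ∧
      (∀ j j', j ≠ j' → ∀ a ∈ B j, a ∉ B j') := by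
  classical
  set N := (σ ∪ τ).sup id + 1 with hN
  have hout : ∀ b ∈ σ ∪ τ, b < N := by
    intro b hb
    have h := Finset.le_sup (f := id) hb
    simp only [id] at h
    omega
  refine ⟨fun j => (Finset.range m).image (fun i => N + j*m + i), fun j => ?_, ?_, ?_⟩
  · rw [Finset.card_image_of_injective _ (fun a b hab => by omega), Finset.card_range]
  · intro j a ha
    simp only [Finset.mem_image, Finset.mem_range] at ha
    obtain ⟨i, hi, rfl⟩ := ha
    constructor <;> intro hc
    · exact absurd (hout _ (Finset.mem_union_left _ hc)) (by omega)
    · exact absurd (hout _ (Finset.mem_union_right _ hc)) (by omega)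
  · intro j j' hjj' a ha ha'
    simp only [Finset.mem_image, Finset.mem_range] at ha ha'
    obtain ⟨i, hi, hieq⟩ := ha
    obtain ⟨i', hi', hieq'⟩ := ha'
    have key : j*m + i = j'*m + i' := by omega
    rcases Nat.lt_or_ge j j' with hlt | hge
    · have h1 : (j+1)*m ≤ j'*m := Nat.mul_le_mul_right m hlt
      have : j*m + m = (j+1)*m := by ring
      omega
    · have hlt' : j' < j := by omega
      have h1 : (j'+1)*m ≤ j*m := Nat.mul_le_mul_right m hlt'
      have : j'*m + m = (j'+1)*m := by ring
      omega

lemma key {K : Type*} [MetricSpace K] [CompactSpace K]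
    (ε : ℝ) (hε : 0 < ε) (f : Finset ℕ → C(K, ℝ))
    (hf : ∀ σ τ : Finset ℕ,
      ((symmDiff σ τ).card : ℝ) ≤ ‖f σ - f τ‖ ∧
      ‖f σ - f τ‖ ≤ (1 + ε) * ((symmDiff σ τ).card : ℝ)) :
    ∀ k : ℕ, ε * 3 ^ k ≤ 1/100 → ∀ σ τ : Finset ℕ, σ ≠ τ →
      ∃ y ∈ derivedSet^[k] (Set.univ : Set K),
        (1 - ((3:ℝ) ^ k - 1) * ε) * ((symmDiff σ τ).card : ℝ) ≤ |f τ y - f σ y| := by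
  classical
  have hub : ∀ (ρ ρ' : Finset ℕ) (x : K),
      |f ρ x - f ρ' x| ≤ (1+ε) * ((symmDiff ρ ρ').card : ℝ) := by
    intro ρ ρ' x
    have h1 : |f ρ x - f ρ' x| = ‖(f ρ - f ρ') x‖ := by
      simp [Real.norm_eq_abs]
    rw [h1]
    exact le_trans (ContinuousMap.norm_coe_le_norm _ x) (hf ρ ρ').2
  have hcard_pos : ∀ σ τ : Finset ℕ, σ ≠ τ → 0 < (symmDiff σ τ).card := by
    intro σ τ hστ
    rw [Finset.card_pos, Finset.nonempty_iff_ne_empty]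
    intro hc
    exact hστ (symmDiff_eq_bot.mp hc)
  intro k
  induction k with
  | zero =>
    intro _ σ τ hστ
    rcases isEmpty_or_nonempty K with hK | hK
    · exfalso
      have h0 : f σ - f τ = 0 := by ext x; exact isEmptyElim x
      have hlow := (hf σ τ).1
      rw [h0, norm_zero] at hlow
      have := hcard_pos σ τ hστ
      have : (0:ℝ) < ((symmDiff σ τ).card : ℝ) := by exact_mod_cast this
      linarith
    · set g := f τ - f σ with hg
      obtain ⟨x, -, hx⟩ := isCompact_univ.exists_isMaxOn (Set.univ_nonempty)
        ((continuous_abs.comp g.continuous).continuousOn (s := Set.univ))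
      refine ⟨x, by simp, ?_⟩
      have h1 : ‖g‖ ≤ |g x| := (ContinuousMap.norm_le _ (abs_nonneg _)).mpr fun z => by
        simpa [Real.norm_eq_abs] using hx (Set.mem_univ z)
      have h2 : ‖f σ - f τ‖ = ‖g‖ := by rw [hg, norm_sub_rev]
      have hlow := (hf σ τ).1
      have h3 : |g x| = |f τ x - f σ x| := by simp [hg]
      simp only [pow_zero]
      rw [show (1 - ((1:ℝ) - 1) * ε) = 1 by ring, one_mul]
      linarith
  | succ k ih =>
    intro hεk σ τ hστ
    have h3pos : (0:ℝ) < 3 ^ k := by positivity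
    have hp1 : (1:ℝ) ≤ 3 ^ k := one_le_pow₀ (by norm_num)
    have hεk3 : ε * (3 ^ k * 3) ≤ 1/100 := by
      rw [← pow_succ]; exact hεk
    have hεk' : ε * 3 ^ k ≤ 1/100 := by nlinarith
    have hεsmall : ε * 3 ^ k ≤ 1/300 := by nlinarith
    have hε100 : ε ≤ 1/100 := by nlinarith
    set m := (symmDiff σ τ).card with hm
    have hm1 : 1 ≤ m := hcard_pos σ τ hστ
    have hmR : (1:ℝ) ≤ (m:ℝ) := by exact_mod_cast hm1
    obtain ⟨B, hBcard, hBout, hBdisj⟩ := blocks σ τ m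
    -- cards
    have hcard3 : ∀ v w : ℕ, v ≠ w →
        (symmDiff (σ ∪ B w) (τ ∪ B v)).card = 3 * m := by
      intro v w hvw
      rw [sd_big (hBout v) (hBout w) (hBdisj v w hvw)]
      rw [hBcard v, hBcard w, ← hm]; ring
    have hne : ∀ v w : ℕ, v ≠ w → σ ∪ B w ≠ τ ∪ B v := by
      intro v w hvw hcon
      have h1 := hcard3 v w hvw
      rw [hcon, symmDiff_self] at h1
      simp at h1
      omega
    have hcardτ : ∀ j, ((symmDiff (τ ∪ B j) τ).card : ℝ) = (m:ℝ) := by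
      intro j
      rw [symmDiff_comm, sd_add (hBout j), hBcard j]
    have hcardσ : ∀ j, ((symmDiff (σ ∪ B j) σ).card : ℝ) = (m:ℝ) := by
      intro j
      rw [symmDiff_comm, sd_add (σ := τ) (τ := σ) (fun a ha => (hBout j a ha).symm), hBcard j]
    have hcardb : ∀ j, ((symmDiff (τ ∪ B j) (σ ∪ B j)).card : ℝ) = (m:ℝ) := by
      intro j
      rw [symmDiff_comm, sd_both (hBout j), ← hm]
    have hcardτσ : ((symmDiff τ σ).card : ℝ) = (m:ℝ) := by rw [symmDiff_comm, ← hm]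
    -- default point
    obtain ⟨y₀, hy₀, -⟩ := ih hεk' σ τ hστ
    -- witnesses
    have H : ∀ v w : ℕ, ∃ y : K, v < w →
        (y ∈ derivedSet^[k] (Set.univ : Set K) ∧
          (1 - ((3:ℝ) ^ k - 1) * ε) * (3*(m:ℝ)) ≤ |f (τ ∪ B v) y - f (σ ∪ B w) y|) := by
      intro v w
      by_cases hvw : v < w
      · obtain ⟨y, hy1, hy2⟩ := ih hεk' (σ ∪ B w) (τ ∪ B v) (hne v w hvw.ne)
        refine ⟨y, fun _ => ⟨hy1, ?_⟩⟩
        rw [hcard3 v w hvw.ne] at hy2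
        push_cast at hy2
        linarith
      · exact ⟨y₀, fun hc => absurd hc hvw⟩
    choose Y hY using H
    -- per-point lower bound on |f τ - f σ|
    have hA : ∀ v w : ℕ, v < w →
        (1 - ((3:ℝ) ^ (k+1) - 1) * ε) * (m:ℝ) ≤ |f τ (Y v w) - f σ (Y v w)| := by
      intro v w hvw
      obtain ⟨-, hF⟩ := hY v w hvw
      set y := Y v w
      have h1 : |f (τ ∪ B v) y - f τ y| ≤ (1+ε)*(m:ℝ) := by
        have := hub (τ ∪ B v) τ y; rwa [hcardτ v] at this
      have h2 : |f (σ ∪ B w) y - f σ y| ≤ (1+ε)*(m:ℝ) := by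
        have := hub (σ ∪ B w) σ y; rwa [hcardσ w] at this
      have e1 : f (τ ∪ B v) y - f (σ ∪ B w) y =
          (f τ y - f σ y) + ((f (τ ∪ B v) y - f τ y) - (f (σ ∪ B w) y - f σ y)) := by ring
      have habs : |f (τ ∪ B v) y - f (σ ∪ B w) y| ≤
          |f τ y - f σ y| + |f (τ ∪ B v) y - f τ y| + |f (σ ∪ B w) y - f σ y| := by
        rw [e1]
        calc _ ≤ |f τ y - f σ y| + |(f (τ ∪ B v) y - f τ y) - (f (σ ∪ B w) y - f σ y)| :=
              abs_add_le _ _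
          _ ≤ _ := by have := abs_sub (f (τ ∪ B v) y - f τ y) (f (σ ∪ B w) y - f σ y); linarith
      rw [pow_succ]
      nlinarith [hF, habs, h1, h2]
    set T : Set K := {x | ∃ v w : ℕ, v < w ∧ Y v w = x} with hT
    by_cases hTinf : T.Infinite
    · -- accumulation point
      obtain ⟨x, hx⟩ := hTinf.exists_accPt_principal
      have hTk : T ⊆ derivedSet^[k] (Set.univ : Set K) := by
        rintro z ⟨v, w, hvw, rfl⟩
        exact (hY v w hvw).1
      have hxk1 : x ∈ derivedSet^[k+1] (Set.univ : Set K) := by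
        rw [Function.iterate_succ_apply']
        exact hx.mono (principal_mono.mpr hTk)
      have hC : IsClosed {z : K | (1 - ((3:ℝ) ^ (k+1) - 1) * ε) * (m:ℝ) ≤ |f τ z - f σ z|} :=
        isClosed_le continuous_const ((f τ).continuous.sub (f σ).continuous).abs
      have hxc : x ∈ closure T := by
        rw [mem_closure_iff_clusterPt]
        exact hx.clusterPt
      have hTC : T ⊆ {z : K | (1 - ((3:ℝ) ^ (k+1) - 1) * ε) * (m:ℝ) ≤ |f τ z - f σ z|} := by
        rintro z ⟨v, w, hvw, rfl⟩
        exact hA v w hvw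
      have := (hC.closure_subset_iff.mpr hTC) hxc
      exact ⟨x, hxk1, this⟩
    · -- finite case: contradiction
      exfalso
      have hTfin : T.Finite := Set.not_infinite.mp hTinf
      haveI := hTfin.to_subtype
      have hmemT : ∀ v w : ℕ, v < w → Y v w ∈ T := fun v w hvw => ⟨v, w, hvw, rfl⟩
      obtain ⟨v, w, d, hvw, hwd, hcc⟩ := combo (fun v w =>
        if h : v < w then
          ((⟨Y v w, hmemT v w h⟩ : T),
            decide (0 ≤ f (τ ∪ B v) (Y v w) - f (σ ∪ B w) (Y v w)))
        else ((⟨Y 0 1, hmemT 0 1 Nat.zero_lt_one⟩ : T), true))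
      simp only [dif_pos hvw, dif_pos hwd] at hcc
      have hyeq : Y v w = Y w d := congrArg (fun p => (p.1 : K)) hcc
      have hseq := congrArg Prod.snd hcc
      simp only at hseq
      have hsiff := decide_eq_decide.mp hseq
      set y := Y v w with hy
      rw [← hyeq] at hsiff
      obtain ⟨-, hF1⟩ := hY v w hvw
      obtain ⟨-, hF2⟩ := hY w d hwd
      rw [← hyeq] at hF2
      -- variables
      set t := f τ y - f σ y with ht'
      set u1 := f (τ ∪ B v) y - f τ y with hu1'
      set u2 := f (τ ∪ B w) y - f τ y with hu2'
      set v1 := f (σ ∪ B w) y - f σ y with hv1'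
      set v2 := f (σ ∪ B d) y - f σ y with hv2'
      have e1 : f (τ ∪ B v) y - f (σ ∪ B w) y = t + u1 - v1 := by
        rw [ht', hu1', hv1']; ring
      have e2 : f (τ ∪ B w) y - f (σ ∪ B d) y = t + u2 - v2 := by
        rw [ht', hu2', hv2']; ring
      have e3 : f (τ ∪ B w) y - f (σ ∪ B w) y = t + u2 - v1 := by
        rw [ht', hu2', hv1']; ring
      rw [e1] at hF1 hsiff
      rw [e2] at hF2 hsiff
      have hbt : |t| ≤ (1+ε)*(m:ℝ) := by
        have := hub τ σ y; rwa [hcardτσ] at this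
      have hbu1 : |u1| ≤ (1+ε)*(m:ℝ) := by
        have := hub (τ ∪ B v) τ y; rwa [hcardτ v] at this
      have hbu2 : |u2| ≤ (1+ε)*(m:ℝ) := by
        have := hub (τ ∪ B w) τ y; rwa [hcardτ w] at this
      have hbv1 : |v1| ≤ (1+ε)*(m:ℝ) := by
        have := hub (σ ∪ B w) σ y; rwa [hcardσ w] at this
      have hbv2 : |v2| ≤ (1+ε)*(m:ℝ) := by
        have := hub (σ ∪ B d) σ y; rwa [hcardσ d] at this
      have hbc : |t + u2 - v1| ≤ (1+ε)*(m:ℝ) := by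
        have := hub (τ ∪ B w) (σ ∪ B w) y; rw [hcardb w] at this
        rwa [e3] at this
      have hθ99 : 99/100 ≤ 1 - ((3:ℝ) ^ k - 1) * ε := by nlinarith
      refine arith (1 - ((3:ℝ)^k - 1) * ε) ε (m:ℝ) t u1 u2 v1 v2 hmR hθ99 hε.le hε100
        hbt hbu1 hbu2 hbv1 hbv2 ?_ ?_ hsiff hbc
      · linarith
      · linarith

/-- If `Δ_ω(ℕ)` (the finite subsets of `ℕ` with the symmetric difference metric)
embeds almost isometrically into `C(K)` for a compact metric space `K`, then the
`ω`-th Cantor–Bendixson derivative `K^{(ω)} = ⋂_{n<ω} K^{(n)}` is nonempty. -/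
theorem deltaOmega_almost_isometric_implies_CB_omega_nonempty
    {K : Type*} [MetricSpace K] [CompactSpace K]
    (h : ∀ ε : ℝ, 0 < ε → ∃ f : Finset ℕ → C(K, ℝ),
      ∀ σ τ : Finset ℕ,
        ((symmDiff σ τ).card : ℝ) ≤ ‖f σ - f τ‖ ∧
        ‖f σ - f τ‖ ≤ (1 + ε) * ((symmDiff σ τ).card : ℝ)) :
    (⋂ n : ℕ, derivedSet^[n] (Set.univ : Set K)).Nonempty := by
  have hclosed : ∀ n : ℕ, IsClosed (derivedSet^[n] (Set.univ : Set K)) := by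
    intro n
    induction n with
    | zero => simp
    | succ n ih => rw [Function.iterate_succ_apply']; exact isClosed_derivedSet _
  have hnonempty : ∀ n : ℕ, (derivedSet^[n] (Set.univ : Set K)).Nonempty := by
    intro n
    have h3 : (0:ℝ) < 3 ^ n := by positivity
    set ε : ℝ := 1 / (100 * 3 ^ n) with hε
    obtain ⟨f, hf⟩ := h ε (by positivity)
    have hεn : ε * 3 ^ n ≤ 1/100 := by
      rw [hε]
      rw [div_mul_eq_mul_div, one_mul]
      rw [div_le_div_iff₀ (by positivity) (by norm_num)]
      ring_nf
      nlinarith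
    obtain ⟨y, hy, -⟩ := key ε (by positivity) f hf n hεn ∅ {0} (by decide)
    exact ⟨y, hy⟩
  apply IsCompact.nonempty_iInter_of_sequence_nonempty_isCompact_isClosed
  · intro n
    rw [Function.iterate_succ_apply']
    exact (derivedSet_subset_closure _).trans (hclosed n).closure_subset
  · exact hnonempty
  · simpa using isCompact_univ
  · exact hclosed
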